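/- (FWER control of the sequential-rejective variant of Tukey's HSD.) Let y_1, …, y_n be independent real random variables with y_i Gaussian with mean μ_i and variance σ_i² > 0, let H be the set of all ordered pairs (i,j), i ≠ j, and for A ⊆ H with H \ A nonempty let q(A) be the (1−α)-quantile of max over (i,j) ∈ H \ A of (Ỹ_i − Ỹ_j)/s_{ij}, where Ỹ_1, …, Ỹ_n are independent centered Gaussians with variances σ_i². Define R_0(ω) = ∅ and R_{k+1}(ω) = R_k(ω) ∪ {(i,j) ∈ H : (y_i(ω) − y_j(ω))/s_{ij} > q(R_k(ω))}. Then P(for all k, R_k(ω) ⊆ {(i,j) : μ_i > μ_j}) ≥ 1 − α, i.e., with probability at least 1 − α every hypothesis H_{i,j} : μ_i ≤ μ_j ever rejected by the algorithm is false. -/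

import Mathlib

open MeasureTheory ProbabilityTheory Set Filter
open scoped Topology

lemma aux_quantile {Ω' : Type*} [MeasurableSpace Ω'] (P' : Measure Ω') [IsProbabilityMeasure P']
    (M : Ω' → ℝ) (hM : Measurable M) (c : ℝ) (hc0 : 0 < c) (hc1 : c < 1) :
    {x : ℝ | ENNReal.ofReal c ≤ P' {ω | M ω ≤ x}}.Nonempty ∧
    BddBelow {x : ℝ | ENNReal.ofReal c ≤ P' {ω | M ω ≤ x}} ∧
    ENNReal.ofReal c ≤ P' {ω | M ω ≤ sInf {x : ℝ | ENNReal.ofReal c ≤ P' {ω | M ω ≤ x}}} := by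
  set ν : Measure ℝ := P'.map M with hν
  have hprob : IsProbabilityMeasure ν := Measure.isProbabilityMeasure_map hM.aemeasurable
  have hset : ∀ x : ℝ, P' {ω | M ω ≤ x} = ν (Iic x) := by
    intro x
    rw [hν, Measure.map_apply hM measurableSet_Iic]
    rfl
  have hS : {x : ℝ | ENNReal.ofReal c ≤ P' {ω | M ω ≤ x}} = {x : ℝ | c ≤ cdf ν x} := by
    ext x
    rw [Set.mem_setOf_eq, Set.mem_setOf_eq, hset, ← ofReal_cdf ν x,
      ENNReal.ofReal_le_ofReal_iff (cdf_nonneg ν x)]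
  rw [hS]
  have hcdfmono := monotone_cdf ν
  have hne : {x : ℝ | c ≤ cdf ν x}.Nonempty := by
    have h1 : ∀ᶠ x in atTop, c < cdf ν x :=
      (tendsto_cdf_atTop ν).eventually (eventually_gt_nhds hc1)
    obtain ⟨x, hx⟩ := h1.exists
    exact ⟨x, hx.le⟩
  have hbdd : BddBelow {x : ℝ | c ≤ cdf ν x} := by
    have h0 : ∀ᶠ x in atBot, cdf ν x < c :=
      (tendsto_cdf_atBot ν).eventually (eventually_lt_nhds hc0)
    obtain ⟨x0, hx0⟩ := eventually_atBot.mp h0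
    refine ⟨x0, fun x hx => ?_⟩
    by_contra h
    exact absurd hx (not_le.mpr (hx0 x (le_of_not_ge h)))
  refine ⟨hne, hbdd, ?_⟩
  rw [hset, ← ofReal_cdf ν _, ENNReal.ofReal_le_ofReal_iff (cdf_nonneg ν _)]
  set a := sInf {x : ℝ | c ≤ cdf ν x} with ha
  have hrc : Tendsto (cdf ν) (𝓝[>] a) (𝓝 (cdf ν a)) :=
    ((cdf ν).right_continuous a).mono_left (nhdsWithin_mono a Set.Ioi_subset_Ici_self)
  refine ge_of_tendsto hrc ?_
  refine Filter.eventually_of_mem self_mem_nhdsWithin (fun x hx => ?_)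
  obtain ⟨s, hs, hsx⟩ := exists_lt_of_csInf_lt hne hx
  exact le_trans hs (hcdfmono hsx.le)

lemma aux_joint {n : ℕ} {Ω : Type*} [MeasurableSpace Ω] (P : Measure Ω) [IsProbabilityMeasure P]
    (f : Fin n → Ω → ℝ) (hmeas : ∀ i, Measurable (f i))
    (hindep : iIndepFun f P)
    (m : Fin n → Measure ℝ) [∀ i, IsProbabilityMeasure (m i)]
    (hdist : ∀ i, P.map (f i) = m i) :
    P.map (fun ω i => f i ω) = Measure.pi m := by
  symm
  apply Measure.pi_eq
  intro s hs
  rw [Measure.map_apply (measurable_pi_lambda _ hmeas) (MeasurableSet.univ_pi hs)]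
  have hpre : (fun ω i => f i ω) ⁻¹' Set.pi Set.univ s = ⋂ i, f i ⁻¹' s i := by
    ext ω; simp [Set.mem_pi]
  rw [hpre]
  have h := hindep.measure_inter_preimage_eq_mul Finset.univ (sets := s) (fun i _ => hs i)
  simp only [Finset.mem_univ, Set.iInter_true] at h
  rw [h]
  exact Finset.prod_congr rfl fun i _ => by
    rw [← hdist i, Measure.map_apply (hmeas i) (hs i)]

/-- Measurability of the sup over a finite nonempty set of pairs. -/
lemma aux_meas_sup {n : ℕ} {Ω' : Type*} [MeasurableSpace Ω']
    (g : (Fin n × Fin n) → Ω' → ℝ) (hg : ∀ p, Measurable (g p))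
    (D : Set (Fin n × Fin n)) (hD : D.Nonempty) :
    Measurable (fun ω => sSup ((fun p => g p ω) '' D)) := by
  have hfin : D.Finite := D.toFinite
  have hne : hfin.toFinset.Nonempty := by rwa [Set.Finite.toFinset_nonempty]
  have heq : (fun ω => sSup ((fun p => g p ω) '' D)) = hfin.toFinset.sup' hne g := by
    funext ω
    rw [Finset.sup'_apply, Finset.sup'_eq_csSup_image, Set.Finite.coe_toFinset]
  rw [heq]
  exact Finset.measurable_sup' hne (fun p _ => hg p)

/-- FWER control of the sequential-rejective variant of Tukey's HSD: with critical
values `q A` given by the `(1-α)`-quantile of `max_{(i,j) ∈ H \ A} (Ỹ i - Ỹ j)/s i j`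
(for independent centered Gaussians `Ỹ i` with variances `σ i ^ 2`), the recursion
`R 0 = ∅`, `R (k+1) = R k ∪ {(i,j) ∈ H : (y i - y j)/s i j > q (R k)}` satisfies:
with probability at least `1 - α`, every rejected hypothesis `H_{i,j} : μ i ≤ μ j`
is false, i.e. `∀ k, R k ⊆ {(i,j) : μ i > μ j}`. -/
theorem stmt_6 {n : ℕ} {Ω Ω' : Type*} [MeasurableSpace Ω] [MeasurableSpace Ω']
    (P : Measure Ω) [IsProbabilityMeasure P] (P' : Measure Ω') [IsProbabilityMeasure P']
    (μ σ : Fin n → ℝ) (hσ : ∀ i, 0 < σ i)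
    (y : Fin n → Ω → ℝ) (hymeas : ∀ i, Measurable (y i))
    (hyindep : iIndepFun y P)
    (hydist : ∀ i, P.map (y i) = gaussianReal (μ i) ⟨(σ i) ^ 2, sq_nonneg _⟩)
    (Yt : Fin n → Ω' → ℝ) (hYmeas : ∀ i, Measurable (Yt i))
    (hYindep : iIndepFun Yt P')
    (hYdist : ∀ i, P'.map (Yt i) = gaussianReal 0 ⟨(σ i) ^ 2, sq_nonneg _⟩)
    (α : ℝ) (hα : α ∈ Set.Ioo (0 : ℝ) 1)
    (q : Set (Fin n × Fin n) → ℝ)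
    (hq : ∀ A : Set (Fin n × Fin n), ({p : Fin n × Fin n | p.1 ≠ p.2} \ A).Nonempty →
      q A = sInf {x : ℝ | ENNReal.ofReal (1 - α) ≤
        P' {ω | sSup ((fun p : Fin n × Fin n =>
            (Yt p.1 ω - Yt p.2 ω) / Real.sqrt ((σ p.1) ^ 2 + (σ p.2) ^ 2)) ''
            ({p : Fin n × Fin n | p.1 ≠ p.2} \ A)) ≤ x}})
    (R : ℕ → Ω → Set (Fin n × Fin n))
    (hR0 : ∀ ω, R 0 ω = ∅)
    (hRs : ∀ k ω, R (k + 1) ω = R k ω ∪ {p : Fin n × Fin n | p.1 ≠ p.2 ∧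
      q (R k ω) < (y p.1 ω - y p.2 ω) / Real.sqrt ((σ p.1) ^ 2 + (σ p.2) ^ 2)}) :
    ENNReal.ofReal (1 - α) ≤
      P {ω | ∀ k, R k ω ⊆ {p : Fin n × Fin n | μ p.2 < μ p.1}} := by
  obtain ⟨hα0, hα1⟩ := hα
  have hc0 : (0 : ℝ) < 1 - α := by linarith
  have hc1 : (1 : ℝ) - α < 1 := by linarith
  set H : Set (Fin n × Fin n) := {p : Fin n × Fin n | p.1 ≠ p.2} with hH
  by_cases hHne : H.Nonempty
  swap
  · -- no hypotheses at all: every `R k ω` is empty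
    have hRempty : ∀ k ω, R k ω = ∅ := by
      intro k
      induction k with
      | zero => exact hR0
      | succ k ih =>
        intro ω
        rw [hRs k ω, ih ω, Set.empty_union]
        ext p
        simp only [Set.mem_setOf_eq, Set.mem_empty_iff_false, iff_false, not_and]
        intro hp
        exact absurd ⟨p, hp⟩ hHne
    have : {ω : Ω | ∀ k, R k ω ⊆ {p : Fin n × Fin n | μ p.2 < μ p.1}} = Set.univ := by
      ext ω
      simp only [Set.mem_setOf_eq, Set.mem_univ, iff_true]
      intro k
      rw [hRempty k ω]
      exact Set.empty_subset _
    rw [this, measure_univ]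
    exact ENNReal.ofReal_le_one.mpr (by linarith)
  -- main case
  have hspos : ∀ p : Fin n × Fin n, 0 < Real.sqrt ((σ p.1) ^ 2 + (σ p.2) ^ 2) := fun p =>
    Real.sqrt_pos.mpr (add_pos (pow_pos (hσ p.1) 2) (pow_pos (hσ p.2) 2))
  set F : Set (Fin n × Fin n) := {p : Fin n × Fin n | p.1 ≠ p.2 ∧ μ p.2 < μ p.1} with hF
  have hTmem : ∀ p : Fin n × Fin n, p ∈ H \ F ↔ p.1 ≠ p.2 ∧ μ p.1 ≤ μ p.2 := by
    intro p
    simp only [hH, hF, Set.mem_diff, Set.mem_setOf_eq, not_and, not_lt]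
    constructor
    · rintro ⟨h1, h2⟩; exact ⟨h1, h2 h1⟩
    · rintro ⟨h1, h2⟩; exact ⟨h1, fun _ => h2⟩
  have hTne : (H \ F).Nonempty := by
    obtain ⟨p0, hp0⟩ := hHne
    rcases le_or_gt (μ p0.1) (μ p0.2) with h | h
    · exact ⟨p0, (hTmem p0).mpr ⟨hp0, h⟩⟩
    · exact ⟨(p0.2, p0.1), (hTmem _).mpr ⟨Ne.symm hp0, h.le⟩⟩
  -- the random variables and their measurability
  have hgYmeas : ∀ p : Fin n × Fin n,
      Measurable (fun ω => (Yt p.1 ω - Yt p.2 ω) / Real.sqrt ((σ p.1) ^ 2 + (σ p.2) ^ 2)) :=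
    fun p => ((hYmeas p.1).sub (hYmeas p.2)).div_const _
  -- monotonicity of q: if A ⊆ F then q F ≤ q A
  have hqmono : ∀ A : Set (Fin n × Fin n), A ⊆ F → q F ≤ q A := by
    intro A hAF
    have hHA : (H \ A).Nonempty := hTne.mono (Set.diff_subset_diff_right hAF)
    rw [hq F hTne, hq A hHA]
    have hA := aux_quantile P'
      (fun ω => sSup ((fun p : Fin n × Fin n =>
        (Yt p.1 ω - Yt p.2 ω) / Real.sqrt ((σ p.1) ^ 2 + (σ p.2) ^ 2)) '' (H \ A)))
      (aux_meas_sup _ hgYmeas _ hHA) (1 - α) hc0 hc1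
    have hFq := aux_quantile P'
      (fun ω => sSup ((fun p : Fin n × Fin n =>
        (Yt p.1 ω - Yt p.2 ω) / Real.sqrt ((σ p.1) ^ 2 + (σ p.2) ^ 2)) '' (H \ F)))
      (aux_meas_sup _ hgYmeas _ hTne) (1 - α) hc0 hc1
    refine csInf_le_csInf hFq.2.1 hA.1 ?_
    intro x hx
    refine le_trans hx (measure_mono ?_)
    intro ω hω
    simp only [Set.mem_setOf_eq] at hω ⊢
    refine le_trans (csSup_le_csSup ?_ ?_ ?_) hω
    · exact (Set.Finite.image _ (Set.toFinite _)).bddAbove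
    · exact hTne.image _
    · exact Set.image_mono (Set.diff_subset_diff_right hAF)
  -- the joint laws agree
  set m : Fin n → Measure ℝ := fun i => gaussianReal 0 ⟨(σ i) ^ 2, sq_nonneg _⟩ with hm
  haveI : ∀ i, IsProbabilityMeasure (m i) := fun i => by rw [hm]; beta_reduce; exact instIsProbabilityMeasureGaussianReal _ _
  have hy'meas : ∀ i, Measurable (fun ω => y i ω - μ i) :=
    fun i => (hymeas i).sub measurable_const
  have hy'indep : iIndepFun (fun i ω => y i ω - μ i) P := by
    have := hyindep.comp (fun i t => t - μ i) (fun i => measurable_id.sub measurable_const)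
    exact this
  have hy'dist : ∀ i, P.map (fun ω => y i ω - μ i) = m i := by
    intro i
    have heq : (fun ω => y i ω - μ i) = (fun t => t + (-μ i)) ∘ y i := by
      funext ω; simp [sub_eq_add_neg]
    rw [heq, ← Measure.map_map (measurable_add_const (-μ i)) (hymeas i), hydist i]
    have := gaussianReal_map_add_const (μ := μ i) (v := ⟨(σ i) ^ 2, sq_nonneg _⟩) (-μ i)
    simpa using this
  have hmapy : P.map (fun ω i => y i ω - μ i) = Measure.pi m :=
    aux_joint P _ hy'meas hy'indep m hy'dist
  have hmapY : P'.map (fun ω i => Yt i ω) = Measure.pi m :=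
    aux_joint P' _ hYmeas hYindep m hYdist
  -- the sup functional
  set G : (Fin n → ℝ) → ℝ := fun v =>
    sSup ((fun p : Fin n × Fin n =>
      (v p.1 - v p.2) / Real.sqrt ((σ p.1) ^ 2 + (σ p.2) ^ 2)) '' (H \ F)) with hG
  have hGmeas : Measurable G := by
    rw [hG]
    exact aux_meas_sup (fun (p : Fin n × Fin n) (v : Fin n → ℝ) => (v p.1 - v p.2) / Real.sqrt ((σ p.1) ^ 2 + (σ p.2) ^ 2))
      (fun p => ((measurable_pi_apply p.1).sub (measurable_pi_apply p.2)).div_const _)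
      _ hTne
  set MT : Ω → ℝ := fun ω => G (fun i => y i ω - μ i) with hMT
  set MT' : Ω' → ℝ := fun ω => G (fun i => Yt i ω) with hMT'
  have hMTmeas : Measurable MT := hGmeas.comp (measurable_pi_lambda _ hy'meas)
  have hMT'meas : Measurable MT' := hGmeas.comp (measurable_pi_lambda _ hYmeas)
  have hdist_eq : ∀ t : ℝ, P {ω | MT ω ≤ t} = P' {ω | MT' ω ≤ t} := by
    intro t
    have h1 : P.map MT = P'.map MT' := by
      rw [hMT, hMT']
      rw [show (fun ω => G (fun i => y i ω - μ i)) = G ∘ (fun ω i => y i ω - μ i) from rfl,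
        show (fun ω => G (fun i => Yt i ω)) = G ∘ (fun ω i => Yt i ω) from rfl,
        ← Measure.map_map hGmeas (measurable_pi_lambda _ hy'meas),
        ← Measure.map_map hGmeas (measurable_pi_lambda _ hYmeas), hmapy, hmapY]
    have h2 := congrArg (fun ν : Measure ℝ => ν (Iic t)) h1
    simp [Measure.map_apply hMTmeas measurableSet_Iic,
      Measure.map_apply hMT'meas measurableSet_Iic] at h2
    exact h2
  -- the quantile property at F
  have hquant := aux_quantile P' MT' hMT'meas (1 - α) hc0 hc1
  have hqF : ENNReal.ofReal (1 - α) ≤ P' {ω | MT' ω ≤ q F} := by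
    rw [hq F hTne]
    exact hquant.2.2
  have hE : ENNReal.ofReal (1 - α) ≤ P {ω | MT ω ≤ q F} := by
    rw [hdist_eq (q F)]
    exact hqF
  refine le_trans hE (measure_mono ?_)
  intro ω hω
  simp only [Set.mem_setOf_eq] at hω ⊢
  -- by induction, R k ω ⊆ F for all k
  have hind : ∀ k, R k ω ⊆ F := by
    intro k
    induction k with
    | zero => rw [hR0 ω]; exact Set.empty_subset _
    | succ k ih =>
      rw [hRs k ω]
      refine Set.union_subset ih ?_
      intro p hp
      obtain ⟨hp1, hp2⟩ := hp
      by_contra hpF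
      have hpT : p ∈ H \ F := ⟨hp1, hpF⟩
      have hμle : μ p.1 ≤ μ p.2 := ((hTmem p).mp hpT).2
      have hv1 : (y p.1 ω - y p.2 ω) / Real.sqrt ((σ p.1) ^ 2 + (σ p.2) ^ 2)
          ≤ ((y p.1 ω - μ p.1) - (y p.2 ω - μ p.2)) / Real.sqrt ((σ p.1) ^ 2 + (σ p.2) ^ 2) := by
        apply div_le_div_of_nonneg_right ?_ (hspos p).le
        linarith
      have hv2 : ((y p.1 ω - μ p.1) - (y p.2 ω - μ p.2))
          / Real.sqrt ((σ p.1) ^ 2 + (σ p.2) ^ 2) ≤ MT ω := by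
        rw [hMT, hG]
        refine le_csSup ((Set.Finite.image _ (Set.toFinite _)).bddAbove) ?_
        exact ⟨p, hpT, rfl⟩
      have hv4 : q F ≤ q (R k ω) := hqmono _ ih
      linarith
  intro k
  exact (hind k).trans (fun p hp => hp.2)
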